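/- If G is a periodic group variety, m ≥ 0, and N is a nil-variety of semigroups, then m(G ∨ C_m ∨ N) = m. -/

import Mathlib

/-!
Formalization framework: semigroup varieties as Galois-closed equational theories
over the free semigroup on countably many letters.  A variety is represented by
its equational theory; the order `V ≤ W` ("V is a subvariety of W") is reverse
inclusion of theories.  `Com` is the lattice of commutative semigroup varieties,
realized as the subtype of varieties whose theory contains the commutative law.
-/

open FreeSemigroup

/-- Words: elements of the free semigroup over a countably infinite alphabet. -/
abbrev Word : Type := FreeSemigroup ℕ

/-- A semigroup identity `u = v`. -/
abbrev SgId : Type := Word × Word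

/-- `spow a n = a ^ (n + 1)` in any (multiplicative) semigroup. -/
def spow {M : Type*} [Mul M] (a : M) : ℕ → M
  | 0 => a
  | n + 1 => a * spow a n

/-- A semigroup `S` satisfies the identity `e.1 = e.2`. -/
def SatS (S : Type) [Semigroup S] (e : SgId) : Prop :=
  ∀ σ : ℕ → S, FreeSemigroup.lift σ e.1 = FreeSemigroup.lift σ e.2

/-- `S` is a model of the set of identities `E`. -/
def Models (S : Type) [Semigroup S] (E : Set SgId) : Prop :=
  ∀ e ∈ E, SatS S e

/-- The equational theory generated by `E`: all identities holding in every
model of `E` (by Birkhoff's theorem this is exactly deductive closure). -/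
def eqTh (E : Set SgId) : Set SgId :=
  { e | ∀ (S : Type) [Semigroup S], Models S E → SatS S e }

theorem subset_eqTh (E : Set SgId) : E ⊆ eqTh E := by
  intro e he S _ hS
  exact hS e he

theorem eqTh_mono {E F : Set SgId} (h : E ⊆ F) : eqTh E ⊆ eqTh F := by
  intro e he S _ hS
  exact he S fun e' he' => hS e' (h he')

theorem eqTh_idem (E : Set SgId) : eqTh (eqTh E) = eqTh E := by
  refine Set.Subset.antisymm ?_ (subset_eqTh _)
  intro e he S _ hS
  exact he S fun e' he' => he' S hS

/-- A semigroup variety, given by its (Galois-closed) equational theory. -/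
structure SgVariety where
  th : Set SgId
  closed : eqTh th = th

theorem SgVariety.ext' {V W : SgVariety} (h : V.th = W.th) : V = W := by
  cases V; cases W; cases h; rfl

/-- The variety defined by a set of identities. -/
def varOf (E : Set SgId) : SgVariety :=
  ⟨eqTh E, eqTh_idem E⟩

/-- `V ≤ W` iff `V` is a subvariety of `W`, i.e. the theory of `W` is contained
in the theory of `V`. -/
instance : PartialOrder SgVariety where
  le V W := W.th ⊆ V.th
  le_refl V := Set.Subset.refl _
  le_trans a b c h1 h2 := Set.Subset.trans h2 h1
  le_antisymm a b h1 h2 := SgVariety.ext' (Set.Subset.antisymm h2 h1)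

/-- The lattice **SEM** of all semigroup varieties: join is intersection of
theories; meet is the variety defined by the union of the theories. -/
instance : Lattice SgVariety :=
  { (inferInstance : PartialOrder SgVariety) with
    sup := fun V W =>
      ⟨V.th ∩ W.th, by
        refine Set.Subset.antisymm (Set.subset_inter ?_ ?_) (subset_eqTh _)
        · exact (eqTh_mono Set.inter_subset_left).trans (le_of_eq V.closed)
        · exact (eqTh_mono Set.inter_subset_right).trans (le_of_eq W.closed)⟩
    le_sup_left := fun V W => Set.inter_subset_left
    le_sup_right := fun V W => Set.inter_subset_right
    sup_le := fun V W U h1 h2 => Set.subset_inter h1 h2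
    inf := fun V W => varOf (V.th ∪ W.th)
    inf_le_left := fun V W => Set.subset_union_left.trans (subset_eqTh _)
    inf_le_right := fun V W => Set.subset_union_right.trans (subset_eqTh _)
    le_inf := fun U V W h1 h2 =>
      (eqTh_mono (Set.union_subset h1 h2)).trans (le_of_eq U.closed) }

/-- The letters `x`, `y`, `z`. -/
def xw : Word := FreeSemigroup.of 0
def yw : Word := FreeSemigroup.of 1
def zw : Word := FreeSemigroup.of 2

/-- The commutative law `xy = yx`. -/
def commId : SgId := (xw * yw, yw * xw)

/-- The lattice **Com**: commutative semigroup varieties. -/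
abbrev ComVariety : Type := { V : SgVariety // commId ∈ V.th }

instance : Lattice ComVariety :=
  { (inferInstance : PartialOrder ComVariety) with
    sup := fun V W => ⟨V.1 ⊔ W.1, ⟨V.2, W.2⟩⟩
    le_sup_left := fun V W => @le_sup_left SgVariety _ V.1 W.1
    le_sup_right := fun V W => @le_sup_right SgVariety _ V.1 W.1
    sup_le := fun V W U h1 h2 => @sup_le SgVariety _ V.1 W.1 U.1 h1 h2
    inf := fun V W => ⟨V.1 ⊓ W.1, subset_eqTh _ (Set.mem_union_left _ V.2)⟩
    inf_le_left := fun V W => @inf_le_left SgVariety _ V.1 W.1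
    inf_le_right := fun V W => @inf_le_right SgVariety _ V.1 W.1
    le_inf := fun U V W h1 h2 => @le_inf SgVariety _ U.1 V.1 W.1 h1 h2 }

/-- The trivial variety `T`. -/
def trivialVar : SgVariety := varOf Set.univ

/-- The variety `COM` of all commutative semigroups. -/
def COMvar : SgVariety := varOf {commId}

/-- The variety `SL` of semilattices. -/
def SLvar : SgVariety := varOf {commId, (xw * xw, xw)}

/-- `C_m = var{xᵐ = xᵐ⁺¹, xy = yx}` for `m ≥ 1`, and `C_0 = T`. -/
def Cvar : ℕ → SgVariety
  | 0 => trivialVar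
  | m + 1 => varOf {commId, (spow xw m, spow xw (m + 1))}

def Tcom : ComVariety := ⟨trivialVar, subset_eqTh _ (Set.mem_univ _)⟩
def COMcom : ComVariety := ⟨COMvar, subset_eqTh _ rfl⟩
def SLcom : ComVariety := ⟨SLvar, subset_eqTh _ (Set.mem_insert _ _)⟩
def Ccom (m : ℕ) : ComVariety :=
  ⟨Cvar m, by
    cases m with
    | zero => exact subset_eqTh _ (Set.mem_univ _)
    | succ m => exact subset_eqTh _ (Set.mem_insert _ _)⟩

/-- A semigroup (nonempty, with the given multiplication) is a group. -/
def IsGroupS (S : Type) [Semigroup S] : Prop :=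
  ∃ e : S, (∀ a : S, e * a = a ∧ a * e = a) ∧ ∀ a : S, ∃ b : S, a * b = e ∧ b * a = e

/-- A nilsemigroup: there is a zero element and some power of every element is zero. -/
def IsNilS (S : Type) [Semigroup S] : Prop :=
  ∃ z : S, (∀ a : S, z * a = z ∧ a * z = z) ∧ ∀ a : S, ∃ n : ℕ, spow a n = z

/-- A group variety: all its (nonempty) members are groups. -/
def IsGroupVariety (V : SgVariety) : Prop :=
  ∀ (S : Type) [Semigroup S], Nonempty S → Models S V.th → IsGroupS S

/-- A nil-variety: all its (nonempty) members are nilsemigroups. -/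
def IsNilVariety (V : SgVariety) : Prop :=
  ∀ (S : Type) [Semigroup S], Nonempty S → Models S V.th → IsNilS S

/-- A combinatorial variety: all groups in it are singletons. -/
def IsCombinatorial (V : SgVariety) : Prop :=
  ∀ (S : Type) [Semigroup S], Models S V.th → IsGroupS S → Subsingleton S

/-- A periodic variety: satisfies `xⁿ = xⁿ⁺ᵏ` for some `n, k ≥ 1`. -/
def IsPeriodic (V : SgVariety) : Prop :=
  ∃ n k : ℕ, (spow xw n, spow xw (n + k + 1)) ∈ V.th

/-- The letter `k` occurs in the word `w`. -/
def occursIn (k : ℕ) (w : Word) : Prop := k = w.head ∨ k ∈ w.tail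

/-- `S` satisfies the identity `w = 0` (i.e. the system `wx = xw = w`, `x` fresh):
every value of `w` in `S` is a (two-sided) zero element. -/
def SatZeroS (S : Type) [Semigroup S] (w : Word) : Prop :=
  ∀ (σ : ℕ → S) (a : S),
    FreeSemigroup.lift σ w * a = FreeSemigroup.lift σ w ∧
      a * FreeSemigroup.lift σ w = FreeSemigroup.lift σ w

/-- The variety `V` satisfies the identity `w = 0`. -/
def VSatZero (V : SgVariety) (w : Word) : Prop :=
  ∀ (S : Type) [Semigroup S], Models S V.th → SatZeroS S w

/-- The words `x²`, `x³`, `x²y`, `xy²`, `x²yz`. -/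
def w_xx : Word := xw * xw
def w_xxx : Word := xw * xw * xw
def w_xxy : Word := xw * xw * yw
def w_xyy : Word := xw * yw * yw
def w_xxyz : Word := xw * xw * yw * zw

/-- The identity `x²y = xy²`. -/
def idQ : SgId := (w_xxy, w_xyy)

/-- The pair of identities expressing `w = 0`, with `k` a fresh letter. -/
def zeroPair (w : Word) (k : ℕ) : Set SgId :=
  {(w * FreeSemigroup.of k, w), (FreeSemigroup.of k * w, w)}

/-- `xprodTo n = x₁x₂⋯xₙ` (for `n ≥ 1`), on the letters `0, …, n-1`. -/
def xprodTo : ℕ → Word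
  | 0 => FreeSemigroup.of 0
  | 1 => FreeSemigroup.of 0
  | n + 2 => xprodTo (n + 1) * FreeSemigroup.of (n + 1)

/-- `I = var{x²y = xy², x²yz = 0, xy = yx}`. -/
def Ivar : SgVariety := varOf ({commId, idQ} ∪ zeroPair w_xxyz 3)

/-- `K = var{x²y = 0, xy = yx}`. -/
def Kvar : SgVariety := varOf ({commId} ∪ zeroPair w_xxy 2)

/-- `L = var{x² = 0, xy = yx}`. -/
def Lvar : SgVariety := varOf ({commId} ∪ zeroPair w_xx 1)

/-- `I_n = var{x²yz = x₁⋯xₙ = 0, x²y = xy², xy = yx}`. -/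
def Ivarn (n : ℕ) : SgVariety :=
  varOf ({commId, idQ} ∪ zeroPair w_xxyz 3 ∪ zeroPair (xprodTo n) n)

/-- `J = var{x²yz = x³ = 0, x²y = xy², xy = yx}`. -/
def Jvar : SgVariety := varOf ({commId, idQ} ∪ zeroPair w_xxyz 3 ∪ zeroPair w_xxx 1)

/-- `J_n = var{x²yz = x³ = x₁⋯xₙ = 0, x²y = xy², xy = yx}`. -/
def Jvarn (n : ℕ) : SgVariety :=
  varOf ({commId, idQ} ∪ zeroPair w_xxyz 3 ∪ zeroPair w_xxx 1 ∪ zeroPair (xprodTo n) n)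

/-- `K_n = var{x²y = x₁⋯xₙ = 0, xy = yx}`. -/
def Kvarn (n : ℕ) : SgVariety :=
  varOf ({commId} ∪ zeroPair w_xxy 2 ∪ zeroPair (xprodTo n) n)

/-- `L_n = var{x² = x₁⋯xₙ = 0, xy = yx}`. -/
def Lvarn (n : ℕ) : SgVariety :=
  varOf ({commId} ∪ zeroPair w_xx 1 ∪ zeroPair (xprodTo n) n)

/-- Generators of `ZR(U)`: the commutative law together with all 0-reduced
identities (in the form of the corresponding identity pairs) holding in `U`. -/
def ZRgen (U : SgVariety) : Set SgId :=
  {commId} ∪ { e : SgId | ∃ (w : Word) (k : ℕ), ¬ occursIn k w ∧ VSatZero U w ∧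
      (e = (w * FreeSemigroup.of k, w) ∨ e = (FreeSemigroup.of k * w, w)) }

/-- `ZR(U)`: the variety given by the commutative law and all 0-reduced
identities holding in `U`. -/
def ZRvar (U : SgVariety) : SgVariety := varOf (ZRgen U)

def Icom : ComVariety := ⟨Ivar, subset_eqTh _ (Set.mem_union_left _ (Set.mem_insert _ _))⟩

def ZRcom (U : SgVariety) : ComVariety :=
  ⟨ZRvar U, subset_eqTh _ (Set.mem_union_left _ rfl)⟩

/-- All nilsemigroups in `V` are nilpotent of degree ≤ n, i.e. satisfy `x₁⋯xₙ = 0`. -/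
def HasDegLe (V : SgVariety) (n : ℕ) : Prop :=
  ∀ (S : Type) [Semigroup S], Nonempty S → Models S V.th → IsNilS S → SatZeroS S (xprodTo n)

/-- `deg V = d` (with `d = ⊤` meaning infinite degree). -/
def DegIs (V : SgVariety) (d : ℕ∞) : Prop :=
  (∃ n : ℕ, 0 < n ∧ d = (n : ℕ∞) ∧ IsLeast {m : ℕ | 0 < m ∧ HasDegLe V m} n) ∨
    (d = ⊤ ∧ ∀ n : ℕ, 0 < n → ¬ HasDegLe V n)

/-- Upper-modular element of a lattice. -/
def IsUpperModular {L : Type*} [Lattice L] (a : L) : Prop :=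
  ∀ b c : L, b ≤ a → a ⊓ (b ⊔ c) = b ⊔ (a ⊓ c)

/-- Codistributive element of a lattice. -/
def IsCodistributive {L : Type*} [Lattice L] (a : L) : Prop :=
  ∀ b c : L, a ⊓ (b ⊔ c) = (a ⊓ b) ⊔ (a ⊓ c)

/-- Costandard element of a lattice. -/
def IsCostandard {L : Type*} [Lattice L] (a : L) : Prop :=
  ∀ b c : L, (a ⊓ b) ⊔ c = (a ⊔ c) ⊓ (b ⊔ c)

/-- Modular element of a lattice. -/
def IsModularElt {L : Type*} [Lattice L] (a : L) : Prop :=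
  ∀ b c : L, b ≤ c → (a ⊔ b) ⊓ c = (a ⊓ c) ⊔ b

/-- Neutral element of a lattice, via the median characterization
(equivalent to: every triple containing `a` generates a distributive
sublattice; Grätzer, "Lattice Theory: Foundation", Theorem 254). -/
def IsNeutralElt {L : Type*} [Lattice L] (a : L) : Prop :=
  ∀ b c : L, (a ⊓ b) ⊔ (b ⊓ c) ⊔ (c ⊓ a) = (a ⊔ b) ⊓ (b ⊔ c) ⊓ (c ⊔ a)


/-! ### Auxiliary lemmas for Statement 10 -/

section Stmt10Aux

theorem spow_add' {M : Type*} [Semigroup M] (a : M) (i j : ℕ) :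
    spow a (i + j + 1) = spow a i * spow a j := by
  induction i with
  | zero => rw [Nat.zero_add]; rfl
  | succ i ih =>
      have h : i + 1 + j + 1 = (i + j + 1) + 1 := by omega
      rw [h]
      show a * spow a (i + j + 1) = (a * spow a i) * spow a j
      rw [ih, mul_assoc]

theorem lift_spow {S : Type*} [Semigroup S] (σ : ℕ → S) (w : Word) (n : ℕ) :
    FreeSemigroup.lift σ (spow w n) = spow (FreeSemigroup.lift σ w) n := by
  induction n with
  | zero => rfl
  | succ n ih =>
      show FreeSemigroup.lift σ (w * spow w n) = _
      rw [map_mul, ih]; rfl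

theorem lift_lift {S : Type*} [Semigroup S] (σ : ℕ → S) (τ : ℕ → Word) (w : Word) :
    FreeSemigroup.lift σ (FreeSemigroup.lift τ w) =
      FreeSemigroup.lift (fun i => FreeSemigroup.lift σ (τ i)) w := by
  induction w using FreeSemigroup.recOnMul with
  | ih1 x => rw [lift_of, lift_of]
  | ih2 x y h1 h2 => rw [map_mul, map_mul, map_mul, h1, h2]

theorem eqTh_refl (E : Set SgId) (u : Word) : (u, u) ∈ eqTh E :=
  fun _ _ _ _ => rfl

theorem eqTh_symm {E : Set SgId} {u v : Word} (h : (u, v) ∈ eqTh E) :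
    (v, u) ∈ eqTh E :=
  fun S _ hS σ => (h S hS σ).symm

theorem eqTh_trans {E : Set SgId} {u v w : Word} (h1 : (u, v) ∈ eqTh E)
    (h2 : (v, w) ∈ eqTh E) : (u, w) ∈ eqTh E :=
  fun S _ hS σ => (h1 S hS σ).trans (h2 S hS σ)

theorem eqTh_mul {E : Set SgId} {u u' v v' : Word} (h1 : (u, u') ∈ eqTh E)
    (h2 : (v, v') ∈ eqTh E) : (u * v, u' * v') ∈ eqTh E := by
  intro S _ hS σ
  show FreeSemigroup.lift σ (u * v) = FreeSemigroup.lift σ (u' * v')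
  rw [map_mul, map_mul, h1 S hS σ, h2 S hS σ]

theorem eqTh_subst {E : Set SgId} {u v : Word} (h : (u, v) ∈ eqTh E)
    (τ : ℕ → Word) :
    (FreeSemigroup.lift τ u, FreeSemigroup.lift τ v) ∈ eqTh E := by
  intro S _ hS σ
  show FreeSemigroup.lift σ (FreeSemigroup.lift τ u) =
    FreeSemigroup.lift σ (FreeSemigroup.lift τ v)
  rw [lift_lift, lift_lift]
  exact h S hS _

/-- The setoid on words induced by an equational theory. -/
def fqSetoid (E : Set SgId) : Setoid Word :=
  ⟨fun u v => (u, v) ∈ eqTh E,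
    ⟨fun u => eqTh_refl E u, fun h => eqTh_symm h, fun h1 h2 => eqTh_trans h1 h2⟩⟩

/-- The relatively free semigroup of the theory `eqTh E`. -/
def FQ (E : Set SgId) : Type := Quotient (fqSetoid E)

def FQ.mk (E : Set SgId) (u : Word) : FQ E := Quotient.mk (fqSetoid E) u

instance (E : Set SgId) : Semigroup (FQ E) where
  mul := Quotient.map₂ (· * ·) (fun _ _ h1 _ _ h2 => eqTh_mul h1 h2)
  mul_assoc := by
    rintro ⟨a⟩ ⟨b⟩ ⟨c⟩
    exact congrArg (Quotient.mk (fqSetoid _)) (mul_assoc a b c)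

theorem FQ.mk_mul (E : Set SgId) (u v : Word) :
    FQ.mk E u * FQ.mk E v = FQ.mk E (u * v) := rfl

theorem FQ.spow_mk (E : Set SgId) (u : Word) (n : ℕ) :
    spow (FQ.mk E u) n = FQ.mk E (spow u n) := by
  induction n with
  | zero => rfl
  | succ n ih => show FQ.mk E u * spow (FQ.mk E u) n = _; rw [ih]; rfl

theorem FQ.lift_mk (E : Set SgId) (σ : ℕ → FQ E) (τ : ℕ → Word)
    (h : ∀ i, σ i = FQ.mk E (τ i)) (w : Word) :
    FreeSemigroup.lift σ w = FQ.mk E (FreeSemigroup.lift τ w) := by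
  induction w using FreeSemigroup.recOnMul with
  | ih1 x => rw [lift_of, lift_of]; exact h x
  | ih2 x y h1 h2 => rw [map_mul, map_mul, h1, h2]; rfl

theorem FQ.models (E : Set SgId) : Models (FQ E) (eqTh E) := by
  intro e he σ
  have h : ∀ i, σ i = FQ.mk E ((σ i).out) := fun i => (Quotient.out_eq (σ i)).symm
  rw [FQ.lift_mk E σ _ h, FQ.lift_mk E σ _ h]
  exact Quotient.sound (eqTh_subst he _)

theorem spow_stable {S : Type*} [Semigroup S] (a : S) {p : ℕ}
    (h : spow a p = spow a (p + 1)) : ∀ t, spow a (p + t) = spow a p := by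
  intro t
  induction t with
  | zero => rfl
  | succ t ih =>
      show a * spow a (p + t) = spow a p
      rw [ih]
      exact h.symm

/-- `mpowMul a m t = aᵐ t` (with `a⁰ t = t`). -/
def mpowMul {M : Type*} [Mul M] (a : M) : ℕ → M → M
  | 0, t => t
  | m + 1, t => spow a m * t

/-- The word `xᵐ yᵠ` (with `x⁰` meaning absent); here `Q = q + 1`. -/
def Uword (m q : ℕ) : Word :=
  match m with
  | 0 => spow yw q
  | m' + 1 => spow xw m' * spow yw q

theorem lift_Uword {S : Type*} [Semigroup S] (σ : ℕ → S) (m q : ℕ) :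
    FreeSemigroup.lift σ (Uword m q) = mpowMul (σ 0) m (spow (σ 1) q) := by
  cases m with
  | zero => show FreeSemigroup.lift σ (spow yw q) = _; rw [lift_spow]; rfl
  | succ m' =>
      show FreeSemigroup.lift σ (spow xw m' * spow yw q) = spow (σ 0) m' * spow (σ 1) q
      rw [map_mul, lift_spow, lift_spow]; rfl

theorem grp_key {S : Type} [Semigroup S] (hg : IsGroupS S) (nG kG : ℕ)
    (hid : ∀ a : S, spow a nG = spow a (nG + kG + 1)) :
    ∀ a t : S, spow a kG * t = t := by
  obtain ⟨eS, he, hinv⟩ := hg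
  have hk : ∀ a : S, spow a kG = eS := by
    intro a
    obtain ⟨b, _, hb2⟩ := hinv (spow a nG)
    calc spow a kG = eS * spow a kG := ((he _).1).symm
      _ = (b * spow a nG) * spow a kG := by rw [hb2]
      _ = b * (spow a nG * spow a kG) := mul_assoc _ _ _
      _ = b * spow a (nG + kG + 1) := by rw [spow_add']
      _ = b * spow a nG := by rw [← hid]
      _ = eS := hb2
  intro a t
  rw [hk a]
  exact (he t).1

end Stmt10Aux


section CapModel

/-- The commutative semigroup `{(i,j) : i,j ≤ K}` with addition truncated at `K`. -/
def CapP (K : ℕ) : Type := {q : ℕ × ℕ // q.1 ≤ K ∧ q.2 ≤ K}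

def cappMul {K : ℕ} (a b : CapP K) : CapP K :=
  ⟨(min (a.1.1 + b.1.1) K, min (a.1.2 + b.1.2) K), by constructor <;> omega⟩

theorem cappMul_fst {K : ℕ} (a b : CapP K) :
    (cappMul a b).1.1 = min (a.1.1 + b.1.1) K := rfl

theorem cappMul_snd {K : ℕ} (a b : CapP K) :
    (cappMul a b).1.2 = min (a.1.2 + b.1.2) K := rfl

instance (K : ℕ) : Semigroup (CapP K) where
  mul := cappMul
  mul_assoc a b c := by
    apply Subtype.ext
    apply Prod.ext
    · show (cappMul (cappMul a b) c).1.1 = (cappMul a (cappMul b c)).1.1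
      rw [cappMul_fst, cappMul_fst, cappMul_fst, cappMul_fst]; omega
    · show (cappMul (cappMul a b) c).1.2 = (cappMul a (cappMul b c)).1.2
      rw [cappMul_snd, cappMul_snd, cappMul_snd, cappMul_snd]; omega

theorem capp_mul_fst {K : ℕ} (a b : CapP K) :
    (a * b).1.1 = min (a.1.1 + b.1.1) K := rfl

theorem capp_mul_snd {K : ℕ} (a b : CapP K) :
    (a * b).1.2 = min (a.1.2 + b.1.2) K := rfl

theorem capp_comm {K : ℕ} (a b : CapP K) : a * b = b * a := by
  apply Subtype.ext
  apply Prod.ext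
  · rw [capp_mul_fst, capp_mul_fst]; omega
  · rw [capp_mul_snd, capp_mul_snd]; omega

theorem capp_spow_fst {K : ℕ} (p : CapP K) (t : ℕ) :
    (spow p t).1.1 = min ((t + 1) * p.1.1) K := by
  induction t with
  | zero =>
      show p.1.1 = min (1 * p.1.1) K
      have := p.2.1
      omega
  | succ t ih =>
      show (p * spow p t).1.1 = _
      rw [capp_mul_fst, ih]
      have h : (t + 1 + 1) * p.1.1 = p.1.1 + (t + 1) * p.1.1 := by ring
      rw [h]
      omega

theorem capp_spow_snd {K : ℕ} (p : CapP K) (t : ℕ) :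
    (spow p t).1.2 = min ((t + 1) * p.1.2) K := by
  induction t with
  | zero =>
      show p.1.2 = min (1 * p.1.2) K
      have := p.2.2
      omega
  | succ t ih =>
      show (p * spow p t).1.2 = _
      rw [capp_mul_snd, ih]
      have h : (t + 1 + 1) * p.1.2 = p.1.2 + (t + 1) * p.1.2 := by ring
      rw [h]
      omega

theorem cap_min_eq (a s s' K : ℕ) (h1 : K ≤ s) (h2 : K ≤ s') :
    min (s * a) K = min (s' * a) K := by
  cases a with
  | zero => simp
  | succ a =>
      have hs : K ≤ s * (a + 1) := le_trans h1 (Nat.le_mul_of_pos_right s (by omega))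
      have hs' : K ≤ s' * (a + 1) := le_trans h2 (Nat.le_mul_of_pos_right s' (by omega))
      omega

theorem capp_models (j : ℕ) :
    Models (CapP (j + 1)) {commId, (spow xw j, spow xw (j + 1))} := by
  intro e he σ
  rcases he with rfl | he
  · show FreeSemigroup.lift σ (xw * yw) = FreeSemigroup.lift σ (yw * xw)
    rw [map_mul, map_mul]
    exact capp_comm _ _
  · rcases he with rfl
    show FreeSemigroup.lift σ (spow xw j) = FreeSemigroup.lift σ (spow xw (j + 1))
    rw [lift_spow, lift_spow]
    apply Subtype.ext
    apply Prod.ext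
    · rw [capp_spow_fst, capp_spow_fst]
      exact cap_min_eq _ _ _ _ (by omega) (by omega)
    · rw [capp_spow_snd, capp_spow_snd]
      exact cap_min_eq _ _ _ _ (by omega) (by omega)

end CapModel


def capg1 (j : ℕ) : CapP (j + 1) := ⟨(1, 0), by omega⟩
def capg2 (j : ℕ) : CapP (j + 1) := ⟨(0, 1), by omega⟩

theorem capg1_spow_fst (j t : ℕ) : (spow (capg1 j) t).1.1 = min (t + 1) (j + 1) := by
  rw [capp_spow_fst]
  show min ((t + 1) * 1) (j + 1) = _
  rw [Nat.mul_one]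

theorem capg2_spow_fst (j t : ℕ) : (spow (capg2 j) t).1.1 = 0 := by
  rw [capp_spow_fst]
  show min ((t + 1) * 0) (j + 1) = 0
  simp

/-- If `G` is a periodic group variety, `m ≥ 0` and `N` is
a nil-variety, then `m(G ∨ C_m ∨ N) = m`, i.e. `m` is the greatest `k` with
`C_k ⊆ G ∨ C_m ∨ N`. -/
theorem m_of_G_Cm_N (G N : SgVariety) (hG : IsGroupVariety G)
    (hGper : IsPeriodic G) (hN : IsNilVariety N) (m : ℕ) :
    IsGreatest {k : ℕ | Cvar k ≤ G ⊔ Cvar m ⊔ N} m := by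
  obtain ⟨nG, kG, hGid⟩ := hGper
  -- the relatively free nilsemigroup of `N`
  have hFQmodels : Models (FQ N.th) N.th := by
    have h := FQ.models N.th
    rwa [N.closed] at h
  obtain ⟨z, hz, hnil⟩ := hN (FQ N.th) ⟨FQ.mk N.th xw⟩ hFQmodels
  obtain ⟨nF, hnF⟩ := hnil (FQ.mk N.th xw)
  -- the 0-reduced identity `y xᴺ = xᴺ` holds in `N`
  have hNabs : (yw * spow xw nF, spow xw nF) ∈ N.th := by
    have hW : FQ.mk N.th (spow xw nF) = z := by rw [← FQ.spow_mk]; exact hnF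
    have hEq : FQ.mk N.th (yw * spow xw nF) = FQ.mk N.th (spow xw nF) := by
      rw [← FQ.mk_mul, hW]
      exact (hz (FQ.mk N.th yw)).2
    have h := Quotient.exact hEq
    rw [← N.closed]
    exact h
  -- the separating identity `xᵐ yᴺ = x^{m+kG+1} yᴺ`
  have heG : (Uword m nF, spow xw (m + kG) * spow yw nF) ∈ G.th := by
    rw [← G.closed]
    intro S _ hS σ
    have hg : IsGroupS S := hG S ⟨σ 0⟩ hS
    have hid : ∀ a : S, spow a nG = spow a (nG + kG + 1) := by
      intro a
      have h := hS _ hGid (fun _ => a)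
      simpa only [lift_spow, xw, lift_of] using h
    have key := grp_key hg nG kG hid
    show FreeSemigroup.lift σ (Uword m nF) =
      FreeSemigroup.lift σ (spow xw (m + kG) * spow yw nF)
    rw [lift_Uword, map_mul, lift_spow, lift_spow]
    simp only [xw, yw, lift_of]
    cases m with
    | zero =>
        show spow (σ 1) nF = spow (σ 0) (0 + kG) * spow (σ 1) nF
        rw [Nat.zero_add, key]
    | succ m' =>
        show spow (σ 0) m' * spow (σ 1) nF =
          spow (σ 0) (m' + 1 + kG) * spow (σ 1) nF
        rw [show m' + 1 + kG = m' + kG + 1 from by omega, spow_add', mul_assoc,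
          key]
  have heC : (Uword m nF, spow xw (m + kG) * spow yw nF) ∈ (Cvar m).th := by
    cases m with
    | zero =>
        show _ ∈ eqTh Set.univ
        intro S _ hS σ
        have hsub : ∀ a b : S, a = b := by
          intro a b
          have h := hS (xw, yw) (Set.mem_univ _) (fun i => if i = 0 then a else b)
          simpa only [xw, yw, lift_of, if_true, one_ne_zero, if_false] using h
        exact hsub _ _
    | succ m' =>
        show _ ∈ eqTh {commId, (spow xw m', spow xw (m' + 1))}
        intro S _ hS σ
        have hst : ∀ a : S, spow a m' = spow a (m' + 1) := by
          intro a
          have h := hS _ (Set.mem_insert_of_mem _ rfl) (fun _ => a)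
          simpa only [lift_spow, xw, lift_of] using h
        show FreeSemigroup.lift σ (Uword (m' + 1) nF) =
          FreeSemigroup.lift σ (spow xw (m' + 1 + kG) * spow yw nF)
        rw [lift_Uword, map_mul, lift_spow, lift_spow]
        simp only [xw, yw, lift_of]
        show spow (σ 0) m' * spow (σ 1) nF =
          spow (σ 0) (m' + 1 + kG) * spow (σ 1) nF
        rw [show m' + 1 + kG = m' + (kG + 1) from by omega,
          spow_stable (σ 0) (hst (σ 0)) (kG + 1)]
  have heN : (Uword m nF, spow xw (m + kG) * spow yw nF) ∈ N.th := by
    rw [← N.closed]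
    intro S _ hS σ
    have key : ∀ c : S, c * spow (σ 1) nF = spow (σ 1) nF := by
      intro c
      have h := hS _ hNabs (fun i => if i = 0 then σ 1 else c)
      simp only [map_mul, lift_spow, xw, yw, lift_of] at h
      simpa using h
    show FreeSemigroup.lift σ (Uword m nF) =
      FreeSemigroup.lift σ (spow xw (m + kG) * spow yw nF)
    rw [lift_Uword, map_mul, lift_spow, lift_spow]
    simp only [xw, yw, lift_of]
    cases m with
    | zero =>
        show spow (σ 1) nF = spow (σ 0) (0 + kG) * spow (σ 1) nF
        exact (key _).symm
    | succ m' =>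
        show spow (σ 0) m' * spow (σ 1) nF =
          spow (σ 0) (m' + 1 + kG) * spow (σ 1) nF
        rw [key, key]
  have heV : (Uword m nF, spow xw (m + kG) * spow yw nF) ∈ (G ⊔ Cvar m ⊔ N).th :=
    ⟨⟨heG, heC⟩, heN⟩
  constructor
  · show Cvar m ≤ G ⊔ Cvar m ⊔ N
    exact le_trans le_sup_right le_sup_left
  · intro k hk
    by_contra hcon
    push_neg at hcon
    obtain ⟨j, rfl, hj⟩ : ∃ j, k = j + 1 ∧ m ≤ j := ⟨k - 1, by omega, by omega⟩
    have he' := hk heV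
    have hsat := he' (CapP (j + 1)) (capp_models j)
      (fun i => if i = 0 then capg1 j else capg2 j)
    simp only [lift_Uword, map_mul, lift_spow, xw, yw, lift_of] at hsat
    norm_num at hsat
    have h := congrArg (fun p : CapP (j + 1) => p.1.1) hsat
    cases m with
    | zero =>
        simp only [mpowMul] at h
        rw [capg2_spow_fst, capp_mul_fst, capg1_spow_fst, capg2_spow_fst] at h
        omega
    | succ m' =>
        simp only [mpowMul] at h
        rw [capp_mul_fst, capp_mul_fst, capg1_spow_fst, capg1_spow_fst,
          capg2_spow_fst] at h
        omega
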